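/- Let U : ℝ^d → ℝ be continuously differentiable, let c ∈ ℝ^d, and let R > 0, r₁ > 0, b > 0 satisfy B_{r₁}(c) ⊆ B_R and |∇U(y)|² ≥ b·|y − c|² for all y ∈ B_{r₁}(c). Let (μ_ε)_{ε>0} be a family of Borel probability measures on ℝ^d with liminf_{ε→0⁺} (1/ε) ∫_{B_R} |∇U|² dμ_ε < ∞. Then limsup_{r→0⁺} liminf_{ε→0⁺} (1/ε) ∫_{B_r(c)} |y − c|³ dμ_ε(y) = 0. -/

import Mathlib

open Filter Topology MeasureTheory

/-- Third-moment concentration estimate: under the finiteness of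
`liminf_{ε→0⁺} ε⁻¹ ∫_{B_R} |∇U|² dμ_ε` and a quadratic lower bound
`|∇U(y)|² ≥ b|y−c|²` on `B_{r₁}(c) ⊆ B_R`, one has
`limsup_{r→0⁺} liminf_{ε→0⁺} ε⁻¹ ∫_{B_r(c)} |y−c|³ dμ_ε = 0`. -/
theorem stmt14 {d : ℕ}
    (U : EuclideanSpace ℝ (Fin d) → ℝ) (hU : ContDiff ℝ 1 U)
    (c : EuclideanSpace ℝ (Fin d)) (R r₁ b : ℝ)
    (hR : 0 < R) (hr₁ : 0 < r₁) (hb : 0 < b)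
    (hsub : Metric.closedBall c r₁ ⊆
      Metric.closedBall (0 : EuclideanSpace ℝ (Fin d)) R)
    (hlow : ∀ y ∈ Metric.closedBall c r₁, b * ‖y - c‖ ^ 2 ≤ ‖gradient U y‖ ^ 2)
    (μ : ℝ → Measure (EuclideanSpace ℝ (Fin d)))
    (hμ : ∀ ε : ℝ, 0 < ε → IsProbabilityMeasure (μ ε))
    (hfin : Filter.liminf (fun ε =>
        (ENNReal.ofReal ε)⁻¹ *
          ∫⁻ x in Metric.closedBall (0 : EuclideanSpace ℝ (Fin d)) R,
            ENNReal.ofReal (‖gradient U x‖ ^ 2) ∂(μ ε))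
      (𝓝[>] (0:ℝ)) < ⊤) :
    Filter.limsup (fun r =>
        Filter.liminf (fun ε =>
            (ENNReal.ofReal ε)⁻¹ *
              ∫⁻ y in Metric.closedBall c r,
                ENNReal.ofReal (‖y - c‖ ^ 3) ∂(μ ε))
          (𝓝[>] (0:ℝ)))
      (𝓝[>] (0:ℝ)) = 0 := by
  set G : ℝ → ENNReal := fun ε =>
      (ENNReal.ofReal ε)⁻¹ *
        ∫⁻ x in Metric.closedBall (0 : EuclideanSpace ℝ (Fin d)) R,
          ENNReal.ofReal (‖gradient U x‖ ^ 2) ∂(μ ε) with hG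
  set L : ENNReal := Filter.liminf G (𝓝[>] (0:ℝ)) with hL
  have hgradcont : Continuous (fun y => gradient U y) := by
    have h1 : Continuous (fun y => fderiv ℝ U y) := hU.continuous_fderiv one_ne_zero
    exact (InnerProductSpace.toDual ℝ
      (EuclideanSpace ℝ (Fin d))).symm.continuous.comp h1
  -- key bound
  have key : ∀ r : ℝ, 0 < r → r ≤ r₁ →
      Filter.liminf (fun ε =>
            (ENNReal.ofReal ε)⁻¹ *
              ∫⁻ y in Metric.closedBall c r,
                ENNReal.ofReal (‖y - c‖ ^ 3) ∂(μ ε))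
          (𝓝[>] (0:ℝ)) ≤ ENNReal.ofReal (r / b) * L := by
    intro r hr hrr₁
    have hstep : ∀ ε : ℝ,
        (ENNReal.ofReal ε)⁻¹ *
          ∫⁻ y in Metric.closedBall c r,
            ENNReal.ofReal (‖y - c‖ ^ 3) ∂(μ ε)
        ≤ ENNReal.ofReal (r / b) * G ε := by
      intro ε
      have hint : (∫⁻ y in Metric.closedBall c r,
            ENNReal.ofReal (‖y - c‖ ^ 3) ∂(μ ε))
          ≤ ENNReal.ofReal (r / b) *
            ∫⁻ x in Metric.closedBall (0 : EuclideanSpace ℝ (Fin d)) R,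
              ENNReal.ofReal (‖gradient U x‖ ^ 2) ∂(μ ε) := by
        have h1 : (∫⁻ y in Metric.closedBall c r,
              ENNReal.ofReal (‖y - c‖ ^ 3) ∂(μ ε))
            ≤ ∫⁻ y in Metric.closedBall c r,
              ENNReal.ofReal (r / b) * ENNReal.ofReal (‖gradient U y‖ ^ 2)
                ∂(μ ε) := by
          refine setLIntegral_mono
            (Measurable.const_mul (by
              exact (ENNReal.measurable_ofReal.comp
                ((hgradcont.norm.pow 2).measurable))) _)
            (fun y hy => ?_)
          have hy₁ : y ∈ Metric.closedBall c r₁ :=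
            Metric.closedBall_subset_closedBall hrr₁ hy
          have hnorm : ‖y - c‖ ≤ r := by
            simpa [dist_eq_norm] using hy
          have h3 : ‖y - c‖ ^ 3 ≤ r * ‖y - c‖ ^ 2 := by
            have : ‖y - c‖ ^ 3 = ‖y - c‖ * ‖y - c‖ ^ 2 := by ring
            rw [this]
            exact mul_le_mul_of_nonneg_right hnorm (sq_nonneg _)
          have h4 : r * ‖y - c‖ ^ 2 ≤ (r / b) * ‖gradient U y‖ ^ 2 := by
            have := hlow y hy₁
            have h5 : (r / b) * (b * ‖y - c‖ ^ 2) ≤ (r / b) * ‖gradient U y‖ ^ 2 :=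
              mul_le_mul_of_nonneg_left this (by positivity)
            calc r * ‖y - c‖ ^ 2 = (r / b) * (b * ‖y - c‖ ^ 2) := by
                  field_simp
              _ ≤ _ := h5
          calc ENNReal.ofReal (‖y - c‖ ^ 3)
              ≤ ENNReal.ofReal ((r / b) * ‖gradient U y‖ ^ 2) :=
                ENNReal.ofReal_le_ofReal (h3.trans h4)
            _ = ENNReal.ofReal (r / b) * ENNReal.ofReal (‖gradient U y‖ ^ 2) :=
                ENNReal.ofReal_mul (by positivity)
        have h2 : (∫⁻ y in Metric.closedBall c r,
              ENNReal.ofReal (r / b) * ENNReal.ofReal (‖gradient U y‖ ^ 2)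
                ∂(μ ε))
            = ENNReal.ofReal (r / b) *
              ∫⁻ y in Metric.closedBall c r,
                ENNReal.ofReal (‖gradient U y‖ ^ 2) ∂(μ ε) :=
          lintegral_const_mul _ (ENNReal.measurable_ofReal.comp
            ((hgradcont.norm.pow 2).measurable))
        have h6 : (∫⁻ y in Metric.closedBall c r,
              ENNReal.ofReal (‖gradient U y‖ ^ 2) ∂(μ ε))
            ≤ ∫⁻ x in Metric.closedBall (0 : EuclideanSpace ℝ (Fin d)) R,
              ENNReal.ofReal (‖gradient U x‖ ^ 2) ∂(μ ε) :=
          lintegral_mono_set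
            ((Metric.closedBall_subset_closedBall hrr₁).trans hsub)
        calc (∫⁻ y in Metric.closedBall c r,
              ENNReal.ofReal (‖y - c‖ ^ 3) ∂(μ ε)) ≤ _ := h1
          _ = _ := h2
          _ ≤ _ := mul_le_mul_right h6 _
      calc (ENNReal.ofReal ε)⁻¹ *
            ∫⁻ y in Metric.closedBall c r,
              ENNReal.ofReal (‖y - c‖ ^ 3) ∂(μ ε)
          ≤ (ENNReal.ofReal ε)⁻¹ * (ENNReal.ofReal (r / b) *
            ∫⁻ x in Metric.closedBall (0 : EuclideanSpace ℝ (Fin d)) R,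
              ENNReal.ofReal (‖gradient U x‖ ^ 2) ∂(μ ε)) :=
            mul_le_mul_right hint _
        _ = ENNReal.ofReal (r / b) * G ε := by rw [hG]; ring
    have hl1 : Filter.liminf (fun ε =>
          (ENNReal.ofReal ε)⁻¹ *
            ∫⁻ y in Metric.closedBall c r,
              ENNReal.ofReal (‖y - c‖ ^ 3) ∂(μ ε)) (𝓝[>] (0:ℝ))
        ≤ Filter.liminf (fun ε => ENNReal.ofReal (r / b) * G ε) (𝓝[>] (0:ℝ)) :=
      Filter.liminf_le_liminf (Filter.Eventually.of_forall hstep)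
    have hl2 : Filter.liminf (fun ε => ENNReal.ofReal (r / b) * G ε)
          (𝓝[>] (0:ℝ)) ≤ ENNReal.ofReal (r / b) * L := by
      have := ENNReal.liminf_mul_le (f := 𝓝[>] (0:ℝ))
        (u := fun _ => ENNReal.ofReal (r / b)) (v := G)
        (Or.inr hfin.ne)
        (Or.inl (by rw [Filter.limsup_const]; exact ENNReal.ofReal_ne_top))
      simp only [Filter.limsup_const, Pi.mul_def] at this
      rw [hL]; exact this
    exact hl1.trans hl2
  -- conclude
  have hbound : Filter.limsup (fun r =>
        Filter.liminf (fun ε =>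
            (ENNReal.ofReal ε)⁻¹ *
              ∫⁻ y in Metric.closedBall c r,
                ENNReal.ofReal (‖y - c‖ ^ 3) ∂(μ ε))
          (𝓝[>] (0:ℝ))) (𝓝[>] (0:ℝ))
      ≤ Filter.limsup (fun r => ENNReal.ofReal (r / b) * L) (𝓝[>] (0:ℝ)) := by
    refine Filter.limsup_le_limsup ?_
    filter_upwards [Ioo_mem_nhdsGT hr₁] with r hr
    exact key r hr.1 hr.2.le
  have htend : Filter.Tendsto (fun r : ℝ => ENNReal.ofReal (r / b) * L)
      (𝓝[>] (0:ℝ)) (𝓝 0) := by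
    have h1 : Filter.Tendsto (fun r : ℝ => ENNReal.ofReal (r / b))
        (𝓝[>] (0:ℝ)) (𝓝 0) := by
      have : Filter.Tendsto (fun r : ℝ => r / b) (𝓝[>] (0:ℝ)) (𝓝 0) := by
        have h0 : Filter.Tendsto (fun r : ℝ => r / b) (𝓝 (0:ℝ)) (𝓝 (0/b)) :=
          tendsto_id.div_const b
        rw [zero_div] at h0
        exact h0.mono_left nhdsWithin_le_nhds
      simpa [Function.comp_def] using (ENNReal.continuous_ofReal.tendsto 0).comp this
    have := ENNReal.Tendsto.mul_const h1 (Or.inr hfin.ne)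
    simpa using this
  have hlim0 : Filter.limsup (fun r => ENNReal.ofReal (r / b) * L)
      (𝓝[>] (0:ℝ)) = 0 := htend.limsup_eq
  exact le_antisymm (hbound.trans_eq hlim0) zero_le
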